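/- Through every point of (ℝ³, g^c₃) there exists a closed timelike path: for every c > 0 and every p ∈ ℝ³ there exist a < b and a C¹ path γ : [a,b] → ℝ³ which is g^c₃-timelike and satisfies γ(a) = γ(b) = p and γ'(a) = γ'(b). -/
import Mathlib


open Set

/-- A `C¹` path `w = (w₀,w₁,w₂) : s → ℝ³` is `g^c₃`-timelike iff at every
`t ∈ s` its derivative `w'` satisfies `w'(t)ᵀ·G^c(w(t))·w'(t) < 0`,
equivalently `c²·(w₀'(t) + w₂(t)·w₁'(t))² > w₁'(t)² + w₂'(t)²`. -/
def TimelikeOn (c : ℝ) (w₀ w₁ w₂ : ℝ → ℝ) (s : Set ℝ) : Prop :=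
  ∀ t ∈ s,
    (derivWithin w₁ s t)^2 + (derivWithin w₂ s t)^2 <
      c^2 * (derivWithin w₀ s t + w₂ t * derivWithin w₁ s t)^2

/-- through every point of `(ℝ³, g^c₃)` there exists a closed
timelike path. -/
theorem stmt_9 (c : ℝ) (hc : 0 < c) (p₀ p₁ p₂ : ℝ) :
    ∃ a b : ℝ, a < b ∧
      ∃ γ₀ γ₁ γ₂ : ℝ → ℝ,
        ContDiffOn ℝ 1 γ₀ (Icc a b) ∧
        ContDiffOn ℝ 1 γ₁ (Icc a b) ∧
        ContDiffOn ℝ 1 γ₂ (Icc a b) ∧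
        TimelikeOn c γ₀ γ₁ γ₂ (Icc a b) ∧
        γ₀ a = p₀ ∧ γ₁ a = p₁ ∧ γ₂ a = p₂ ∧
        γ₀ b = p₀ ∧ γ₁ b = p₁ ∧ γ₂ b = p₂ ∧
        derivWithin γ₀ (Icc a b) a = derivWithin γ₀ (Icc a b) b ∧
        derivWithin γ₁ (Icc a b) a = derivWithin γ₁ (Icc a b) b ∧
        derivWithin γ₂ (Icc a b) a = derivWithin γ₂ (Icc a b) b := by
  have hc' : c ≠ 0 := ne_of_gt hc
  set r : ℝ := 3 / c with hr
  have hr0 : 0 < r := by positivity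
  set γ₀ : ℝ → ℝ := fun t => p₀ - (p₂ - r) * r * Real.sin t - r^2/4 * Real.sin (2*t) with hγ₀
  set γ₁ : ℝ → ℝ := fun t => p₁ + r * Real.sin t with hγ₁
  set γ₂ : ℝ → ℝ := fun t => p₂ - r + r * Real.cos t with hγ₂
  have h2t : ∀ t : ℝ, HasDerivAt (fun t : ℝ => Real.sin (2*t)) (Real.cos (2*t) * 2) t := by
    intro t
    exact (Real.hasDerivAt_sin (2*t)).comp t (by simpa using (hasDerivAt_id t).const_mul 2)
  have h0 : ∀ t : ℝ, HasDerivAt γ₀ (-((p₂ - r) * r * Real.cos t) - r^2/4 * (Real.cos (2*t) * 2)) t := by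
    intro t
    exact (((Real.hasDerivAt_sin t).const_mul ((p₂ - r) * r)).const_sub p₀).sub ((h2t t).const_mul (r^2/4))
  have h1 : ∀ t : ℝ, HasDerivAt γ₁ (r * Real.cos t) t := by
    intro t
    exact ((Real.hasDerivAt_sin t).const_mul r).const_add p₁
  have h2 : ∀ t : ℝ, HasDerivAt γ₂ (r * (-Real.sin t)) t := by
    intro t
    exact ((Real.hasDerivAt_cos t).const_mul r).const_add (p₂ - r)
  have hpi : (0:ℝ) < 2 * Real.pi := Real.two_pi_pos
  refine ⟨0, 2 * Real.pi, hpi, γ₀, γ₁, γ₂, ?_, ?_, ?_, ?_, ?_, ?_, ?_, ?_, ?_, ?_, ?_, ?_, ?_⟩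
  · have cs : ContDiff ℝ 1 Real.sin := Real.contDiff_sin.of_le le_top
    have : ContDiff ℝ 1 γ₀ :=
      ((contDiff_const.sub (contDiff_const.mul cs)).sub
        (contDiff_const.mul (cs.comp (contDiff_const.mul contDiff_id))))
    exact this.contDiffOn
  · have cs : ContDiff ℝ 1 Real.sin := Real.contDiff_sin.of_le le_top
    exact (contDiff_const.add (contDiff_const.mul cs)).contDiffOn
  · have cc : ContDiff ℝ 1 Real.cos := Real.contDiff_cos.of_le le_top
    exact (contDiff_const.add (contDiff_const.mul cc)).contDiffOn
  · intro t ht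
    have hU := (uniqueDiffOn_Icc hpi) t ht
    rw [((h0 t).hasDerivWithinAt).derivWithin hU, ((h1 t).hasDerivWithinAt).derivWithin hU,
      ((h2 t).hasDerivWithinAt).derivWithin hU]
    have key : -((p₂ - r) * r * Real.cos t) - r^2/4 * (Real.cos (2*t) * 2)
        + γ₂ t * (r * Real.cos t) = r^2/2 := by
      rw [Real.cos_two_mul]; simp only [hγ₂]; ring
    rw [key]
    have hs : (r * Real.cos t)^2 + (r * (-Real.sin t))^2 = r^2 := by
      have := Real.sin_sq_add_cos_sq t; nlinarith [this]
    rw [hs, hr]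
    have hL : (3/c)^2 = 9/c^2 := by rw [div_pow]; norm_num
    have hR : c^2 * ((3/c)^2/2)^2 = 81/(4*c^2) := by field_simp; ring
    rw [hR, hL, div_lt_div_iff₀ (by positivity) (by positivity)]
    nlinarith [sq_nonneg c, hc]
  · simp [hγ₀]
  · simp [hγ₁]
  · simp [hγ₂]
  · have : Real.sin (2 * (2 * Real.pi)) = 0 := by
      rw [show 2 * (2 * Real.pi) = 2 * Real.pi + 2 * Real.pi by ring, Real.sin_add_two_pi,
        Real.sin_two_pi]
    simp [hγ₀, Real.sin_two_pi, this]
  · simp [hγ₁, Real.sin_two_pi]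
  · simp [hγ₂, Real.cos_two_pi]
  · have hUa := (uniqueDiffOn_Icc hpi) 0 (by constructor <;> simp [le_of_lt hpi])
    have hUb := (uniqueDiffOn_Icc hpi) (2 * Real.pi) (by constructor <;> simp [le_of_lt hpi])
    rw [((h0 0).hasDerivWithinAt).derivWithin hUa,
      ((h0 (2 * Real.pi)).hasDerivWithinAt).derivWithin hUb]
    have : Real.cos (2 * (2 * Real.pi)) = 1 := by
      rw [show 2 * (2 * Real.pi) = 2 * Real.pi + 2 * Real.pi by ring, Real.cos_add_two_pi,
        Real.cos_two_pi]
    simp [Real.cos_two_pi, this]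
  · have hUa := (uniqueDiffOn_Icc hpi) 0 (by constructor <;> simp [le_of_lt hpi])
    have hUb := (uniqueDiffOn_Icc hpi) (2 * Real.pi) (by constructor <;> simp [le_of_lt hpi])
    rw [((h1 0).hasDerivWithinAt).derivWithin hUa,
      ((h1 (2 * Real.pi)).hasDerivWithinAt).derivWithin hUb]
    simp [Real.cos_two_pi]
  · have hUa := (uniqueDiffOn_Icc hpi) 0 (by constructor <;> simp [le_of_lt hpi])
    have hUb := (uniqueDiffOn_Icc hpi) (2 * Real.pi) (by constructor <;> simp [le_of_lt hpi])
    rw [((h2 0).hasDerivWithinAt).derivWithin hUa,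
      ((h2 (2 * Real.pi)).hasDerivWithinAt).derivWithin hUb]
    simp [Real.sin_two_pi]
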